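/- Let $\beta$ be a one-dimensional fractional Brownian motion with Hurst parameter $H = 3/4$. Then there is a constant $c > 0$ such that for all $n > 1$, $\mathbf{E}\big| \frac{1}{n} \sum_{k=0}^{n-1} (|\beta_{k+1} - \beta_k|^2 - 1) \big|^2 \leq c \cdot \log(n)/n$. -/

import Mathlib

open MeasureTheory ProbabilityTheory Filter

/-- A process `β : ℝ → Ω → ℝ` is a (one-dimensional) fractional Brownian motion with Hurst
parameter `H` under `P` if it is a centered Gaussian process (every finite linear combination
of its values is a centered Gaussian random variable) with covariance
`E(β_s β_t) = (|s|^{2H} + |t|^{2H} - |s-t|^{2H})/2`. -/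
def IsFBM {Ω : Type*} [MeasurableSpace Ω] (P : Measure Ω) (H : ℝ) (β : ℝ → Ω → ℝ) : Prop :=
  (∀ t, Measurable (β t)) ∧
  (∀ (n : ℕ) (c : Fin n → ℝ) (t : Fin n → ℝ), ∃ v : NNReal,
    P.map (fun ω => ∑ i, c i * β (t i) ω) = gaussianReal 0 v) ∧
  (∀ s t : ℝ, ∫ ω, β s ω * β t ω ∂P =
    (|s| ^ (2 * H) + |t| ^ (2 * H) - |s - t| ^ (2 * H)) / 2)


open Real
open scoped NNReal ENNReal

lemma integrable_pow_mul_exp_neg_mul_sq' {b : ℝ} (hb : 0 < b) (k : ℕ) :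
    Integrable (fun x : ℝ => x ^ k * Real.exp (-b * x ^ 2)) := by
  have h := integrable_rpow_mul_exp_neg_mul_sq hb (s := (k : ℝ))
    (by have : (0:ℝ) ≤ k := Nat.cast_nonneg k; linarith : (-1:ℝ) < (k:ℝ))
  simpa [Real.rpow_natCast] using h

lemma integral_pow_mul_exp_rec {b : ℝ} (hb : 0 < b) (k : ℕ) :
    ∫ x : ℝ, x ^ (k + 2) * Real.exp (-b * x ^ 2) =
      ((k : ℝ) + 1) / (2 * b) * ∫ x : ℝ, x ^ k * Real.exp (-b * x ^ 2) := by
  have hderiv : ∀ x : ℝ, HasDerivAt (fun x : ℝ => x ^ (k+1) * Real.exp (-b * x ^ 2))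
      (((k:ℝ)+1) * x ^ k * Real.exp (-b * x ^ 2) - 2 * b * (x ^ (k+2) * Real.exp (-b * x ^ 2))) x := by
    intro x
    have h1 : HasDerivAt (fun x : ℝ => x ^ (k+1)) (((k:ℝ)+1) * x ^ k) x := by
      simpa using hasDerivAt_pow (k+1) x
    have h2 : HasDerivAt (fun x : ℝ => Real.exp (-b * x ^ 2)) ((-b * (2*x)) * Real.exp (-b * x^2)) x := by
      have : HasDerivAt (fun x : ℝ => -b * x ^ 2) (-b * (2*x)) x := by
        simpa using (hasDerivAt_pow 2 x).const_mul (-b)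
      simpa [mul_comm] using this.exp
    have := h1.mul h2
    refine (this : HasDerivAt (fun x => x ^ (k+1) * Real.exp (-b * x ^ 2)) _ x).congr_deriv ?_
    ring
  have hint : Integrable (fun x : ℝ =>
      ((k:ℝ)+1) * x ^ k * Real.exp (-b * x ^ 2) - 2 * b * (x ^ (k+2) * Real.exp (-b * x ^ 2))) := by
    have i1 := (integrable_pow_mul_exp_neg_mul_sq' hb k).const_mul ((k:ℝ)+1)
    have i2 := (integrable_pow_mul_exp_neg_mul_sq' hb (k+2)).const_mul (2*b)
    simpa [mul_assoc, Pi.sub_def] using i1.sub i2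
  have hzero := integral_eq_zero_of_hasDerivAt_of_integrable hderiv hint
    (by simpa [mul_assoc] using integrable_pow_mul_exp_neg_mul_sq' hb (k+1))
  have hsub : (∫ x : ℝ, (((k:ℝ)+1) * x ^ k * Real.exp (-b * x ^ 2)
      - 2 * b * (x ^ (k+2) * Real.exp (-b * x ^ 2))))
      = ((k:ℝ)+1) * (∫ x : ℝ, x ^ k * Real.exp (-b * x ^ 2))
        - 2 * b * ∫ x : ℝ, x ^ (k+2) * Real.exp (-b * x ^ 2) := by
    rw [integral_sub ?_ ((integrable_pow_mul_exp_neg_mul_sq' hb (k+2)).const_mul (2*b))]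
    · simp_rw [mul_assoc]
      rw [MeasureTheory.integral_const_mul, MeasureTheory.integral_const_mul,
        MeasureTheory.integral_const_mul]
    · simpa [mul_assoc] using (integrable_pow_mul_exp_neg_mul_sq' hb k).const_mul ((k:ℝ)+1)
  rw [hsub] at hzero
  have hb' : (2:ℝ) * b ≠ 0 := by positivity
  rw [div_mul_eq_mul_div, eq_div_iff hb']
  linarith

section GaussMoments

variable {v : ℝ≥0}

lemma gaussianPDFReal_zero_eq (v : ℝ≥0) :
    gaussianPDFReal 0 v = fun x : ℝ => (√(2 * π * v))⁻¹ * Real.exp (-((2 * (v:ℝ))⁻¹) * x ^ 2) := by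
  ext x
  rw [gaussianPDFReal]
  congr 1
  rw [sub_zero]
  ring_nf

lemma integral_gaussianReal_eq (hv : v ≠ 0) (g : ℝ → ℝ) :
    ∫ x, g x ∂(gaussianReal 0 v) = ∫ x, gaussianPDFReal 0 v x * g x := by
  rw [gaussianReal_of_var_ne_zero _ hv]
  have hd : (volume.withDensity (gaussianPDF 0 v)) =
      volume.withDensity (fun x => ((gaussianPDFReal 0 v x).toNNReal : ℝ≥0∞)) := by
    congr 1
  rw [hd, integral_withDensity_eq_integral_smul
    ((measurable_gaussianPDFReal 0 v).real_toNNReal) g]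
  congr 1
  ext x
  simp [NNReal.smul_def, Real.coe_toNNReal _ (gaussianPDFReal_nonneg 0 v x)]

lemma integrable_gaussianReal_iff (hv : v ≠ 0) (g : ℝ → ℝ) :
    Integrable g (gaussianReal 0 v) ↔
      Integrable (fun x => gaussianPDFReal 0 v x * g x) volume := by
  rw [gaussianReal_of_var_ne_zero _ hv]
  have hd : (volume.withDensity (gaussianPDF 0 v)) =
      volume.withDensity (fun x => ((gaussianPDFReal 0 v x).toNNReal : ℝ≥0∞)) := by
    congr 1
  rw [hd, integrable_withDensity_iff_integrable_smul
    ((measurable_gaussianPDFReal 0 v).real_toNNReal)]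
  constructor <;> intro h <;> refine h.congr (Eventually.of_forall fun x => ?_) <;>
    simp [NNReal.smul_def, Real.coe_toNNReal _ (gaussianPDFReal_nonneg 0 v x)]

lemma integrable_pow_gaussianReal (v : ℝ≥0) (k : ℕ) :
    Integrable (fun x : ℝ => x ^ k) (gaussianReal 0 v) := by
  by_cases hv : v = 0
  · rw [hv, gaussianReal_zero_var]
    exact (integrable_const ((0:ℝ) ^ k)).congr (ae_eq_dirac _).symm
  · rw [integrable_gaussianReal_iff hv]
    have hv0 : (0:ℝ) < v := lt_of_le_of_ne v.coe_nonneg (by exact_mod_cast Ne.symm hv)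
    have hb : (0:ℝ) < (2 * (v:ℝ))⁻¹ := by positivity
    have := ((integrable_pow_mul_exp_neg_mul_sq' hb k).const_mul (√(2 * π * v))⁻¹)
    refine this.congr (Eventually.of_forall fun x => ?_)
    rw [gaussianPDFReal_zero_eq]
    ring

lemma integral_pow_gaussianReal_eq (hv : v ≠ 0) (k : ℕ) :
    ∫ x, x ^ k ∂(gaussianReal 0 v) =
      (√(2 * π * v))⁻¹ * ∫ x : ℝ, x ^ k * Real.exp (-((2 * (v:ℝ))⁻¹) * x ^ 2) := by
  rw [integral_gaussianReal_eq hv, gaussianPDFReal_zero_eq]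
  rw [← MeasureTheory.integral_const_mul]
  congr 1
  ext x
  ring

lemma integral_id_sq_gaussianReal (v : ℝ≥0) :
    ∫ x, x ^ 2 ∂(gaussianReal 0 v) = v := by
  by_cases hv : v = 0
  · simp [hv, gaussianReal_zero_var]
  · have hv0 : (0:ℝ) < v := lt_of_le_of_ne v.coe_nonneg (by exact_mod_cast Ne.symm hv)
    have hb : (0:ℝ) < (2 * (v:ℝ))⁻¹ := by positivity
    rw [integral_pow_gaussianReal_eq hv, integral_pow_mul_exp_rec hb 0]
    have h0 : ∫ x : ℝ, x ^ 0 * Real.exp (-((2 * (v:ℝ))⁻¹) * x ^ 2) = √(π / (2 * (v:ℝ))⁻¹) := by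
      simp_rw [pow_zero, one_mul]
      exact integral_gaussian _
    rw [h0]
    have h1 : √(π / (2 * (v:ℝ))⁻¹) = √(2 * π * v) := by
      congr 1
      field_simp
    rw [h1]
    have h2 : √(2 * π * v) ≠ 0 := by positivity
    field_simp
    simp

lemma integral_pow_four_gaussianReal (v : ℝ≥0) :
    ∫ x, x ^ 4 ∂(gaussianReal 0 v) = 3 * (v:ℝ) ^ 2 := by
  by_cases hv : v = 0
  · simp [hv, gaussianReal_zero_var]
  · have hv0 : (0:ℝ) < v := lt_of_le_of_ne v.coe_nonneg (by exact_mod_cast Ne.symm hv)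
    have hb : (0:ℝ) < (2 * (v:ℝ))⁻¹ := by positivity
    have h4 : (4 : ℕ) = 2 + 2 := by norm_num
    rw [integral_pow_gaussianReal_eq hv, h4, integral_pow_mul_exp_rec hb 2]
    have h2' : (√(2 * π * v))⁻¹ * ∫ x : ℝ, x ^ 2 * Real.exp (-((2 * (v:ℝ))⁻¹) * x ^ 2) = v := by
      rw [← integral_pow_gaussianReal_eq hv, integral_id_sq_gaussianReal]
    have hc : (((2:ℕ):ℝ) + 1) / (2 * (2 * (v:ℝ))⁻¹) = 3 * v := by
      field_simp
      ring
    rw [hc]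
    calc (√(2 * π * ↑v))⁻¹ * (3 * ↑v * ∫ x : ℝ, x ^ 2 * Real.exp (-((2 * (v:ℝ))⁻¹) * x ^ 2))
        = (3 * ↑v) * ((√(2 * π * ↑v))⁻¹ * ∫ x : ℝ, x ^ 2 * Real.exp (-((2 * (v:ℝ))⁻¹) * x ^ 2)) := by ring
      _ = 3 * (v:ℝ)^2 := by rw [h2']; ring

end GaussMoments
section RV

variable {Ω : Type*} [MeasurableSpace Ω] {P : Measure Ω}

lemma gauss_rv_integrable {Z : Ω → ℝ} (hZ : Measurable Z) {v : ℝ≥0}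
    (hmap : P.map Z = gaussianReal 0 v) (k : ℕ) :
    Integrable (fun ω => Z ω ^ k) P := by
  have h := (integrable_map_measure (μ := P) (f := Z) (g := fun x : ℝ => x ^ k)
    (by fun_prop) hZ.aemeasurable).mp
  rw [hmap] at h
  exact h (integrable_pow_gaussianReal v k)

lemma gauss_rv_integral_pow {Z : Ω → ℝ} (hZ : Measurable Z) {v : ℝ≥0}
    (hmap : P.map Z = gaussianReal 0 v) (k : ℕ) :
    ∫ ω, Z ω ^ k ∂P = ∫ x, x ^ k ∂(gaussianReal 0 v) := by
  rw [← hmap, integral_map hZ.aemeasurable (by fun_prop)]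

lemma gauss_rv_fourth {Z : Ω → ℝ} (hZ : Measurable Z) {v : ℝ≥0}
    (hmap : P.map Z = gaussianReal 0 v) :
    ∫ ω, Z ω ^ 4 ∂P = 3 * (∫ ω, Z ω ^ 2 ∂P) ^ 2 := by
  rw [gauss_rv_integral_pow hZ hmap 4, gauss_rv_integral_pow hZ hmap 2,
    integral_id_sq_gaussianReal, integral_pow_four_gaussianReal]

end RV

section Pair

variable {Ω : Type*} [MeasurableSpace Ω] {P : Measure Ω} [IsProbabilityMeasure P]

lemma gauss_pair {X Y : Ω → ℝ} (hX : Measurable X) (hY : Measurable Y)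
    (hg : ∀ a b : ℝ, ∃ v : ℝ≥0,
      P.map (fun ω => a * X ω + b * Y ω) = gaussianReal 0 v) :
    Integrable (fun ω => (X ω ^ 2 - 1) * (Y ω ^ 2 - 1)) P ∧
    ∫ ω, (X ω ^ 2 - 1) * (Y ω ^ 2 - 1) ∂P =
      ((∫ ω, X ω ^ 2 ∂P) - 1) * ((∫ ω, Y ω ^ 2 ∂P) - 1) +
        2 * (∫ ω, X ω * Y ω ∂P) ^ 2 := by
  obtain ⟨vX, hvX⟩ := hg 1 0
  obtain ⟨vY, hvY⟩ := hg 0 1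
  obtain ⟨vS, hvS⟩ := hg 1 1
  obtain ⟨vD, hvD⟩ := hg 1 (-1)
  simp only [one_mul, zero_mul, add_zero, zero_add, neg_one_mul, ← sub_eq_add_neg]
    at hvX hvY hvS hvD
  have hSm : Measurable (fun ω => X ω + Y ω) := hX.add hY
  have hDm : Measurable (fun ω => X ω - Y ω) := hX.sub hY
  -- integrabilities
  have iX2 := gauss_rv_integrable hX hvX 2
  have iY2 := gauss_rv_integrable hY hvY 2
  have iX4 := gauss_rv_integrable hX hvX 4
  have iY4 := gauss_rv_integrable hY hvY 4
  have iS2 := gauss_rv_integrable hSm hvS 2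
  have iD2 := gauss_rv_integrable hDm hvD 2
  have iS4 := gauss_rv_integrable hSm hvS 4
  have iD4 := gauss_rv_integrable hDm hvD 4
  have iXY : Integrable (fun ω => X ω * Y ω) P := by
    have h : Integrable (fun ω => ((X ω + Y ω) ^ 2 - (X ω - Y ω) ^ 2) / 4) P := by
      exact (iS2.sub iD2).div_const 4
    refine h.congr (Filter.Eventually.of_forall fun ω => ?_)
    ring
  have iX2Y2 : Integrable (fun ω => X ω ^ 2 * Y ω ^ 2) P := by
    have h : Integrable (fun ω =>
        ((X ω + Y ω) ^ 4 + (X ω - Y ω) ^ 4 - 2 * X ω ^ 4 - 2 * Y ω ^ 4) / 12) P := by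
      exact (((iS4.add iD4).sub (iX4.const_mul 2)).sub (iY4.const_mul 2)).div_const 12
    refine h.congr (Filter.Eventually.of_forall fun ω => ?_)
    ring
  have iProd : Integrable (fun ω => (X ω ^ 2 - 1) * (Y ω ^ 2 - 1)) P := by
    have h : Integrable (fun ω => X ω ^ 2 * Y ω ^ 2 - X ω ^ 2 - Y ω ^ 2 + 1) P := by
      exact ((iX2Y2.sub iX2).sub iY2).add (integrable_const (1:ℝ))
    refine h.congr (Filter.Eventually.of_forall fun ω => ?_)
    ring
  refine ⟨iProd, ?_⟩
  set p := ∫ ω, X ω ^ 2 ∂P with hp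
  set q := ∫ ω, Y ω ^ 2 ∂P with hq
  set r := ∫ ω, X ω * Y ω ∂P with hr
  have i2XY : Integrable (fun ω => 2 * (X ω * Y ω)) P := by exact iXY.const_mul 2
  have in2XY : Integrable (fun ω => -2 * (X ω * Y ω)) P := by exact iXY.const_mul (-2)
  -- second moments of sum and difference
  have ES2 : ∫ ω, (X ω + Y ω) ^ 2 ∂P = p + 2 * r + q := by
    have he : ∫ ω, (X ω + Y ω) ^ 2 ∂P
        = ∫ ω, X ω ^ 2 + (2 * (X ω * Y ω) + Y ω ^ 2) ∂P := by
      congr 1; funext ω; ring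
    rw [he, integral_add iX2 (by exact i2XY.add iY2), integral_add i2XY iY2,
      integral_const_mul]
    ring
  have ED2 : ∫ ω, (X ω - Y ω) ^ 2 ∂P = p - 2 * r + q := by
    have he : ∫ ω, (X ω - Y ω) ^ 2 ∂P
        = ∫ ω, X ω ^ 2 + (-2 * (X ω * Y ω) + Y ω ^ 2) ∂P := by
      congr 1; funext ω; ring
    rw [he, integral_add iX2 (by exact in2XY.add iY2), integral_add in2XY iY2,
      integral_const_mul]
    ring
  -- fourth moments
  have EX4 := gauss_rv_fourth hX hvX
  have EY4 := gauss_rv_fourth hY hvY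
  have ES4 := gauss_rv_fourth hSm hvS
  have ED4 := gauss_rv_fourth hDm hvD
  rw [ES2] at ES4
  rw [ED2] at ED4
  rw [← hp] at EX4
  rw [← hq] at EY4
  -- compute ∫ X²Y²
  have EX2Y2 : ∫ ω, X ω ^ 2 * Y ω ^ 2 ∂P = p * q + 2 * r ^ 2 := by
    have he : ∫ ω, X ω ^ 2 * Y ω ^ 2 ∂P = ∫ ω,
        ((X ω + Y ω) ^ 4 + (X ω - Y ω) ^ 4 - 2 * X ω ^ 4 - 2 * Y ω ^ 4) / 12 ∂P := by
      congr 1; funext ω; ring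
    rw [he, integral_div,
      integral_sub (by exact (iS4.add iD4).sub (iX4.const_mul 2)) (by exact iY4.const_mul 2),
      integral_sub (by exact iS4.add iD4) (by exact iX4.const_mul 2),
      integral_add iS4 iD4, integral_const_mul, integral_const_mul, ES4, ED4, EX4, EY4]
    ring
  -- final expansion
  have he : ∫ ω, (X ω ^ 2 - 1) * (Y ω ^ 2 - 1) ∂P
      = ∫ ω, X ω ^ 2 * Y ω ^ 2 - X ω ^ 2 - Y ω ^ 2 + 1 ∂P := by
    congr 1; funext ω; ring
  rw [he, integral_add (by exact (iX2Y2.sub iX2).sub iY2) (integrable_const 1),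
    integral_sub (by exact iX2Y2.sub iX2) iY2, integral_sub iX2Y2 iX2, EX2Y2]
  simp only [integral_const, measure_univ, ENNReal.toReal_one, probReal_univ, smul_eq_mul, one_mul, ← hp, ← hq]
  ring

end Pair
noncomputable def phi (m : ℕ) : ℝ :=
  (((m:ℝ) + 1) ^ ((3:ℝ)/2) + |(m:ℝ) - 1| ^ ((3:ℝ)/2) - 2 * (m:ℝ) ^ ((3:ℝ)/2)) / 2

lemma phi_zero_sq : phi 0 ^ 2 ≤ 1 := by
  have : phi 0 = 1 := by
    simp [phi, Real.one_rpow, Real.zero_rpow (by norm_num : ((3:ℝ)/2) ≠ 0)]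
  rw [this]; norm_num

lemma phi_one_sq : phi 1 ^ 2 ≤ 1 := by
  have h : phi 1 = (2 ^ ((3:ℝ)/2) - 2) / 2 := by
    simp [phi, Real.one_rpow, Real.zero_rpow (by norm_num : ((3:ℝ)/2) ≠ 0)]
    ring
  have h2 : (2:ℝ) ^ ((3:ℝ)/2) ≤ 2 ^ (2:ℝ) :=
    Real.rpow_le_rpow_left_iff (by norm_num) |>.mpr (by norm_num)
  have h2' : (2:ℝ) ^ (2:ℝ) = 4 := by
    rw [show (2:ℝ) = ((2:ℕ):ℝ) by norm_num, Real.rpow_natCast]; norm_num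
  have h0 : (0:ℝ) ≤ 2 ^ ((3:ℝ)/2) - 2 := by
    have : (2:ℝ) ^ (1:ℝ) ≤ 2 ^ ((3:ℝ)/2) :=
      Real.rpow_le_rpow_left_iff (by norm_num) |>.mpr (by norm_num)
    rw [Real.rpow_one] at this
    linarith
  rw [h]
  rw [div_pow]
  nlinarith [h2' ▸ h2]

lemma phi_sq_le {m : ℕ} (hm : 2 ≤ m) : phi m ^ 2 ≤ (9/4) / ((m:ℝ) - 1) := by
  have hm' : (2:ℝ) ≤ (m:ℝ) := by exact_mod_cast hm
  set f : ℝ → ℝ := fun x => x ^ ((3:ℝ)/2) with hf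
  set f' : ℝ → ℝ := fun x => (3/2) * x ^ ((1:ℝ)/2) with hf'
  have hderiv : ∀ x : ℝ, HasDerivAt f (f' x) x := by
    intro x
    have := Real.hasDerivAt_rpow_const (x := x) (p := (3:ℝ)/2) (Or.inr (by norm_num))
    convert this using 1
    norm_num
    rfl
  have hmono : ∀ x y : ℝ, 0 ≤ x → x ≤ y → f' x ≤ f' y := by
    intro x y hx hxy
    have := Real.rpow_le_rpow hx hxy (by norm_num : (0:ℝ) ≤ 1/2)
    simp only [hf']
    nlinarith
  -- MVT on [m, m+1]
  obtain ⟨c₁, hc₁, hc₁'⟩ := exists_hasDerivAt_eq_slope f f' (by linarith : (m:ℝ) < m + 1)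
    (fun x _ => (hderiv x).continuousAt.continuousWithinAt) (fun x _ => hderiv x)
  obtain ⟨c₂, hc₂, hc₂'⟩ := exists_hasDerivAt_eq_slope f f' (by linarith : (m:ℝ) - 1 < m)
    (fun x _ => (hderiv x).continuousAt.continuousWithinAt) (fun x _ => hderiv x)
  have e1 : f ((m:ℝ) + 1) - f m = f' c₁ := by
    rw [hc₁', show (m:ℝ) + 1 - (m:ℝ) = 1 by ring, div_one]
  have e2 : f (m:ℝ) - f ((m:ℝ) - 1) = f' c₂ := by
    rw [hc₂', show (m:ℝ) - ((m:ℝ) - 1) = 1 by ring, div_one]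
  have habs : |(m:ℝ) - 1| = (m:ℝ) - 1 := abs_of_nonneg (by linarith)
  have hphi : phi m = (f' c₁ - f' c₂) / 2 := by
    rw [phi, habs]
    have : ((m:ℝ) + 1) ^ ((3:ℝ)/2) + ((m:ℝ) - 1) ^ ((3:ℝ)/2) - 2 * (m:ℝ) ^ ((3:ℝ)/2)
        = (f ((m:ℝ) + 1) - f m) - (f (m:ℝ) - f ((m:ℝ) - 1)) := by
      simp only [hf]; ring
    rw [this, e1, e2]
  -- bounds on f' values
  have hb1 : f' c₁ ≤ f' ((m:ℝ) + 1) := hmono _ _ (by rcases hc₁ with ⟨h, _⟩; linarith) (by rcases hc₁ with ⟨_, h⟩; linarith)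
  have hb2 : f' ((m:ℝ) - 1) ≤ f' c₂ := hmono _ _ (by linarith) (by rcases hc₂ with ⟨h, _⟩; linarith)
  -- sqrt bound
  have hsq : ∀ x : ℝ, 0 ≤ x → x ^ ((1:ℝ)/2) = Real.sqrt x := by
    intro x hx
    rw [Real.sqrt_eq_rpow]
  have hs : Real.sqrt ((m:ℝ) + 1) - Real.sqrt ((m:ℝ) - 1) ≤ 2 / Real.sqrt ((m:ℝ) - 1) := by
    set s := Real.sqrt ((m:ℝ) + 1)
    set t := Real.sqrt ((m:ℝ) - 1)
    have hs2 : s ^ 2 = (m:ℝ) + 1 := Real.sq_sqrt (by linarith)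
    have ht2 : t ^ 2 = (m:ℝ) - 1 := Real.sq_sqrt (by linarith)
    have ht1 : 1 ≤ t := by
      rw [show (1:ℝ) = Real.sqrt 1 by simp]
      exact Real.sqrt_le_sqrt (by linarith)
    have hts : t ≤ s := Real.sqrt_le_sqrt (by linarith)
    rw [show (2:ℝ) / t = 2 * t⁻¹ by ring, ← sub_nonneg]
    have ht0 : (0:ℝ) < t := by linarith
    have hinv : t * t⁻¹ = 1 := mul_inv_cancel₀ (ne_of_gt ht0)
    nlinarith [hs2, ht2, hts, ht1, hinv, ht0]
  have hphile : phi m ≤ (3/2) / Real.sqrt ((m:ℝ) - 1) := by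
    rw [hphi]
    have heq : f' ((m:ℝ) + 1) - f' ((m:ℝ) - 1)
        = (3/2) * (Real.sqrt ((m:ℝ)+1) - Real.sqrt ((m:ℝ)-1)) := by
      simp only [hf']
      rw [hsq _ (by linarith), hsq _ (by linarith)]
      ring
    have h1 : f' c₁ - f' c₂ ≤ f' ((m:ℝ) + 1) - f' ((m:ℝ) - 1) := by linarith
    rw [heq] at h1
    have h2 := mul_le_mul_of_nonneg_left hs (by norm_num : (0:ℝ) ≤ 3/2)
    have h3 : (3/2) * (2 / Real.sqrt ((m:ℝ)-1)) = 2 * ((3/2) / Real.sqrt ((m:ℝ)-1)) := by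
      ring
    rw [h3] at h2
    linarith
  have hphige : 0 ≤ phi m := by
    rw [hphi]
    have : f' c₂ ≤ f' c₁ := by
      apply hmono _ _ (by rcases hc₂ with ⟨h, _⟩; linarith)
      rcases hc₂ with ⟨_, h⟩; rcases hc₁ with ⟨h', _⟩; linarith
    linarith
  have hsqrtpos : 0 < Real.sqrt ((m:ℝ) - 1) := Real.sqrt_pos.mpr (by linarith)
  have hsq2 : (Real.sqrt ((m:ℝ) - 1)) ^ 2 = (m:ℝ) - 1 := Real.sq_sqrt (by linarith)
  calc phi m ^ 2 ≤ ((3/2) / Real.sqrt ((m:ℝ) - 1)) ^ 2 := by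
        apply pow_le_pow_left₀ hphige hphile
    _ = (9/4) / ((m:ℝ) - 1) := by
        rw [div_pow, hsq2]; norm_num

lemma harmonic_le_log (n : ℕ) :
    ∑ i ∈ Finset.range n, (1:ℝ) / (i + 1) ≤ 1 + Real.log n := by
  induction n with
  | zero => simp
  | succ n ih =>
    rw [Finset.sum_range_succ]
    rcases Nat.eq_zero_or_pos n with hn | hn
    · subst hn; simp
    · have hn' : (0:ℝ) < n := by exact_mod_cast hn
      have key : Real.log n + 1 / ((n:ℝ) + 1) ≤ Real.log (n + 1) := by
        have hx : (0:ℝ) < (n:ℝ) / (n + 1) := by positivity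
        have := Real.log_le_sub_one_of_pos hx
        rw [Real.log_div (by positivity) (by positivity)] at this
        have h1 : (n:ℝ) / (n + 1) - 1 = -(1 / ((n:ℝ) + 1)) := by
          field_simp
          ring
        rw [h1] at this
        linarith
      push_cast
      linarith

lemma sum_phi_sq_le {n : ℕ} (hn : 2 ≤ n) :
    ∑ m ∈ Finset.range n, phi m ^ 2 ≤ 17/4 + (9/4) * Real.log n := by
  have hsplit : ∑ m ∈ Finset.range n, phi m ^ 2
      = phi 0 ^ 2 + phi 1 ^ 2 + ∑ m ∈ Finset.Ico 2 n, phi m ^ 2 := by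
    rw [Finset.range_eq_Ico, ← Finset.sum_Ico_consecutive _ (by norm_num : 0 ≤ 2) hn]
    rw [show Finset.Ico 0 2 = Finset.range 2 from rfl, Finset.sum_range_succ,
      Finset.sum_range_one]
  rw [hsplit]
  have h1 : ∑ m ∈ Finset.Ico 2 n, phi m ^ 2
      ≤ ∑ m ∈ Finset.Ico 2 n, (9/4) / ((m:ℝ) - 1) := by
    apply Finset.sum_le_sum
    intro m hm
    exact phi_sq_le (Finset.mem_Ico.mp hm).1
  have h2 : ∑ m ∈ Finset.Ico 2 n, (9/4) / ((m:ℝ) - 1)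
      = (9/4) * ∑ i ∈ Finset.range (n - 2), (1:ℝ) / (i + 1) := by
    rw [Finset.sum_Ico_eq_sum_range, Finset.mul_sum]
    apply Finset.sum_congr rfl
    intro i _
    have : ((2 + i : ℕ) : ℝ) - 1 = (i:ℝ) + 1 := by push_cast; ring
    rw [this]
    ring
  have h3 : ∑ i ∈ Finset.range (n - 2), (1:ℝ) / (i + 1) ≤ 1 + Real.log n := by
    refine (harmonic_le_log (n - 2)).trans ?_
    have : Real.log ((n - 2 : ℕ) : ℝ) ≤ Real.log n := by
      rcases Nat.eq_zero_or_pos (n - 2) with h | h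
      · rw [h]
        simp only [Nat.cast_zero, Real.log_zero]
        exact Real.log_nonneg (by exact_mod_cast Nat.one_le_of_lt hn)
      · apply Real.log_le_log (by exact_mod_cast h)
        exact_mod_cast Nat.sub_le n 2
    linarith
  have h4 : ∑ m ∈ Finset.Ico 2 n, phi m ^ 2 ≤ (9/4) * (1 + Real.log n) := by
    rw [h2] at h1
    have h5 := mul_le_mul_of_nonneg_left h3 (by norm_num : (0:ℝ) ≤ 9/4)
    linarith
  linarith [phi_zero_sq, phi_one_sq, h4]
lemma sum_dist_le (F : ℕ → ℝ) (hF : ∀ m, 0 ≤ F m) {n j : ℕ} (hj : j < n) :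
    ∑ k ∈ Finset.range n, F (Nat.dist j k) ≤ 2 * ∑ m ∈ Finset.range n, F m := by
  have hsplit : ∑ k ∈ Finset.range n, F (Nat.dist j k)
      = ∑ k ∈ Finset.range (j+1), F (Nat.dist j k)
        + ∑ k ∈ Finset.Ico (j+1) n, F (Nat.dist j k) := by
    rw [Finset.range_eq_Ico,
      ← Finset.sum_Ico_consecutive (fun k => F (Nat.dist j k)) (Nat.zero_le (j+1)) hj]
    rw [Finset.range_eq_Ico]
  have h1 : ∑ k ∈ Finset.range (j+1), F (Nat.dist j k) ≤ ∑ m ∈ Finset.range n, F m := by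
    have he : ∑ k ∈ Finset.range (j+1), F (Nat.dist j k)
        = ∑ m ∈ Finset.range (j+1), F m := by
      rw [← Finset.sum_range_reflect (fun m => F m) (j+1)]
      apply Finset.sum_congr rfl
      intro k hk
      congr 1
      have hk' : k ≤ j := Nat.lt_succ_iff.mp (Finset.mem_range.mp hk)
      rw [Nat.dist_eq_sub_of_le_right hk']
      omega
    rw [he]
    apply Finset.sum_le_sum_of_subset_of_nonneg
    · exact Finset.range_subset_range.mpr hj
    · intro m _ _; exact hF m
  have h2 : ∑ k ∈ Finset.Ico (j+1) n, F (Nat.dist j k) ≤ ∑ m ∈ Finset.range n, F m := by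
    have he : ∑ k ∈ Finset.Ico (j+1) n, F (Nat.dist j k)
        = ∑ m ∈ Finset.Ico 1 (n - j), F m := by
      rw [Finset.sum_Ico_eq_sum_range, Finset.sum_Ico_eq_sum_range]
      have hlen : n - (j+1) = n - j - 1 := by omega
      rw [hlen]
      apply Finset.sum_congr rfl
      intro i _
      congr 1
      rw [Nat.dist_eq_sub_of_le (by omega : j ≤ j + 1 + i)]
      omega
    rw [he]
    apply Finset.sum_le_sum_of_subset_of_nonneg
    · intro m hm
      rw [Finset.mem_Ico] at hm
      rw [Finset.mem_range]
      omega
    · intro m _ _; exact hF m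
  linarith

lemma abs_comb_eq_phi (j k : ℕ) :
    (|(j:ℝ) - k + 1| ^ ((3:ℝ)/2) + |(j:ℝ) - k - 1| ^ ((3:ℝ)/2)
      - 2 * |(j:ℝ) - k| ^ ((3:ℝ)/2)) / 2 = phi (Nat.dist j k) := by
  rcases le_total k j with h | h
  · set m := j - k with hm
    have hjk : (j:ℝ) - k = (m:ℝ) := by
      rw [hm]; push_cast [Nat.cast_sub h]; ring
    rw [Nat.dist_eq_sub_of_le_right h, ← hm, phi, hjk]
    have h1 : |(m:ℝ) + 1| = (m:ℝ) + 1 := abs_of_nonneg (by positivity)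
    have h2 : |(m:ℝ)| = (m:ℝ) := abs_of_nonneg (Nat.cast_nonneg m)
    rw [h1, h2]
  · set m := k - j with hm
    have hjk : (j:ℝ) - k = -(m:ℝ) := by
      rw [hm]; push_cast [Nat.cast_sub h]; ring
    rw [Nat.dist_eq_sub_of_le h, ← hm, phi, hjk]
    have h1 : |-(m:ℝ) + 1| = |(m:ℝ) - 1| := by
      rw [show -(m:ℝ) + 1 = -((m:ℝ) - 1) by ring, abs_neg]
    have h2 : |-(m:ℝ) - 1| = (m:ℝ) + 1 := by
      rw [show -(m:ℝ) - 1 = -((m:ℝ) + 1) by ring, abs_neg]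
      exact abs_of_nonneg (by positivity)
    have h3 : |-(m:ℝ)| = (m:ℝ) := by
      rw [abs_neg]; exact abs_of_nonneg (Nat.cast_nonneg m)
    rw [h1, h2, h3]
    ring

/-- **Variance bound for quadratic variations of fBm, `H = 3/4`:**
`E | n⁻¹ ∑_{k<n} (|β_{k+1} - β_k|² - 1) |² ≤ c_H / n`. -/
theorem stmt5 {Ω : Type*} [MeasurableSpace Ω] (P : Measure Ω) [IsProbabilityMeasure P]
    (H : ℝ) (hH : H = 3 / 4) (β : ℝ → Ω → ℝ) (hβ : IsFBM P H β) :
    ∃ c : ℝ, 0 < c ∧ ∀ n : ℕ, 1 < n →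
      ∫ ω, ((1 / (n : ℝ)) * ∑ k ∈ Finset.range n,
          ((β ((k : ℝ) + 1) ω - β (k : ℝ) ω) ^ 2 - 1)) ^ 2 ∂P ≤ c * Real.log n / n := by
  obtain ⟨hmeas, hgauss, hcov⟩ := hβ
  subst hH
  have hcov' : ∀ s t : ℝ, ∫ ω, β s ω * β t ω ∂P
      = (|s| ^ ((3:ℝ)/2) + |t| ^ ((3:ℝ)/2) - |s - t| ^ ((3:ℝ)/2)) / 2 := by
    intro s t
    have h := hcov s t
    rw [show (2:ℝ) * (3/4) = 3/2 by norm_num] at h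
    exact h
  -- single and pair gaussianity
  have hone : ∀ s : ℝ, ∃ v : ℝ≥0, P.map (β s) = gaussianReal 0 v := by
    intro s
    obtain ⟨v, hv⟩ := hgauss 1 (fun _ => 1) (fun _ => s)
    refine ⟨v, ?_⟩
    rw [← hv]
    congr 1
    funext ω
    simp
  have hpairsum : ∀ s t : ℝ, ∃ v : ℝ≥0,
      P.map (fun ω => β s ω + β t ω) = gaussianReal 0 v := by
    intro s t
    obtain ⟨v, hv⟩ := hgauss 2 ![1, 1] ![s, t]
    refine ⟨v, ?_⟩
    rw [← hv]
    congr 1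
    funext ω
    simp [Fin.sum_univ_two]
  -- integrability of products
  have hiprod : ∀ s t : ℝ, Integrable (fun ω => β s ω * β t ω) P := by
    intro s t
    obtain ⟨v1, h1⟩ := hone s
    obtain ⟨v2, h2⟩ := hone t
    obtain ⟨v3, h3⟩ := hpairsum s t
    have i1 := gauss_rv_integrable (hmeas s) h1 2
    have i2 := gauss_rv_integrable (hmeas t) h2 2
    have i3 := gauss_rv_integrable ((hmeas s).add (hmeas t)) h3 2
    have h : Integrable (fun ω => ((β s ω + β t ω) ^ 2 - β s ω ^ 2 - β t ω ^ 2) / 2) P := by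
      exact ((i3.sub i1).sub i2).div_const 2
    refine h.congr (Filter.Eventually.of_forall fun ω => ?_)
    ring
  -- increments
  set X : ℕ → Ω → ℝ := fun k ω => β ((k:ℝ) + 1) ω - β (k:ℝ) ω with hX
  have hXmeas : ∀ k : ℕ, Measurable (X k) := fun k => (hmeas _).sub (hmeas _)
  have hXg : ∀ j k : ℕ, ∀ a b : ℝ, ∃ v : ℝ≥0,
      P.map (fun ω => a * X j ω + b * X k ω) = gaussianReal 0 v := by
    intro j k a b
    obtain ⟨v, hv⟩ := hgauss 4 ![a, -a, b, -b] ![(j:ℝ)+1, (j:ℝ), (k:ℝ)+1, (k:ℝ)]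
    refine ⟨v, ?_⟩
    rw [← hv]
    congr 1
    funext ω
    simp only [hX, Fin.sum_univ_four, Matrix.cons_val_zero, Matrix.cons_val_one,
      Matrix.head_cons, Matrix.cons_val_two, Matrix.tail_cons, Matrix.cons_val_three]
    ring
  have hpair := fun j k : ℕ => gauss_pair (hXmeas j) (hXmeas k) (hXg j k)
  -- covariance of increments
  have hXcov : ∀ j k : ℕ, ∫ ω, X j ω * X k ω ∂P = phi (Nat.dist j k) := by
    intro j k
    have hint : ∫ ω, X j ω * X k ω ∂P
        = (∫ ω, β ((j:ℝ)+1) ω * β ((k:ℝ)+1) ω ∂P) - (∫ ω, β ((j:ℝ)+1) ω * β (k:ℝ) ω ∂P)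
          - ((∫ ω, β (j:ℝ) ω * β ((k:ℝ)+1) ω ∂P) - ∫ ω, β (j:ℝ) ω * β (k:ℝ) ω ∂P) := by
      have i12 : Integrable (fun ω => β ((j:ℝ)+1) ω * β ((k:ℝ)+1) ω - β ((j:ℝ)+1) ω * β (k:ℝ) ω) P := by
        exact (hiprod _ _).sub (hiprod _ _)
      have i34 : Integrable (fun ω => β (j:ℝ) ω * β ((k:ℝ)+1) ω - β (j:ℝ) ω * β (k:ℝ) ω) P := by
        exact (hiprod _ _).sub (hiprod _ _)
      rw [← integral_sub (hiprod _ _) (hiprod _ _), ← integral_sub (hiprod _ _) (hiprod _ _),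
        ← integral_sub i12 i34]
      congr 1
      funext ω
      simp only [hX]
      ring
    rw [hint, hcov', hcov', hcov', hcov', ← abs_comb_eq_phi j k]
    rw [show (j:ℝ)+1 - ((k:ℝ)+1) = (j:ℝ) - k by ring,
      show (j:ℝ)+1 - (k:ℝ) = (j:ℝ) - k + 1 by ring,
      show (j:ℝ) - ((k:ℝ)+1) = (j:ℝ) - k - 1 by ring]
    ring
  have hXvar : ∀ j : ℕ, ∫ ω, X j ω ^ 2 ∂P = 1 := by
    intro j
    have h : ∫ ω, X j ω ^ 2 ∂P = ∫ ω, X j ω * X j ω ∂P := by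
      congr 1
      funext ω
      ring
    rw [h, hXcov j j, Nat.dist_self]
    simp [phi, Real.one_rpow, Real.zero_rpow (by norm_num : ((3:ℝ)/2) ≠ 0)]
  have hval : ∀ j k : ℕ, ∫ ω, (X j ω ^ 2 - 1) * (X k ω ^ 2 - 1) ∂P
      = 2 * phi (Nat.dist j k) ^ 2 := by
    intro j k
    rw [(hpair j k).2, hXvar, hXvar, hXcov]
    ring
  -- main estimate
  refine ⟨40, by norm_num, ?_⟩
  intro n hn
  have hn2 : 2 ≤ n := hn
  have hn0 : (0:ℝ) < n := by exact_mod_cast (by omega : 0 < n)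
  have hsq : ∀ (c : ℝ) (g : ℕ → ℝ), (c * ∑ k ∈ Finset.range n, g k) ^ 2
      = c ^ 2 * ∑ j ∈ Finset.range n, ∑ k ∈ Finset.range n, g j * g k := by
    intro c g
    rw [mul_pow, pow_two (∑ k ∈ Finset.range n, g k), Finset.sum_mul_sum]
  have hLHS : ∫ ω, ((1 / (n : ℝ)) * ∑ k ∈ Finset.range n,
        ((β ((k : ℝ) + 1) ω - β (k : ℝ) ω) ^ 2 - 1)) ^ 2 ∂P
      = (1/(n:ℝ))^2 * ∑ j ∈ Finset.range n, ∑ k ∈ Finset.range n,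
          ∫ ω, (X j ω ^ 2 - 1) * (X k ω ^ 2 - 1) ∂P := by
    have he : (fun ω => ((1 / (n : ℝ)) * ∑ k ∈ Finset.range n,
          ((β ((k : ℝ) + 1) ω - β (k : ℝ) ω) ^ 2 - 1)) ^ 2)
        = fun ω => (1/(n:ℝ))^2 * ∑ j ∈ Finset.range n, ∑ k ∈ Finset.range n,
            (X j ω ^ 2 - 1) * (X k ω ^ 2 - 1) := by
      funext ω
      have := hsq (1/(n:ℝ)) (fun k : ℕ => (β ((k : ℝ) + 1) ω - β (k : ℝ) ω) ^ 2 - 1)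
      simp only [hX]
      exact this
    rw [show (∫ ω, ((1 / (n : ℝ)) * ∑ k ∈ Finset.range n,
        ((β ((k : ℝ) + 1) ω - β (k : ℝ) ω) ^ 2 - 1)) ^ 2 ∂P)
      = ∫ ω, (1/(n:ℝ))^2 * ∑ j ∈ Finset.range n, ∑ k ∈ Finset.range n,
          (X j ω ^ 2 - 1) * (X k ω ^ 2 - 1) ∂P from congrArg (fun f => ∫ ω, f ω ∂P) he]
    rw [integral_const_mul]
    congr 1
    rw [integral_finset_sum _ (fun j _ => integrable_finset_sum _ (fun k _ => (hpair j k).1))]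
    exact Finset.sum_congr rfl fun j _ =>
      integral_finset_sum _ (fun k _ => (hpair j k).1)
  rw [hLHS]
  have hrw : ∑ j ∈ Finset.range n, ∑ k ∈ Finset.range n,
      ∫ ω, (X j ω ^ 2 - 1) * (X k ω ^ 2 - 1) ∂P
      = ∑ j ∈ Finset.range n, ∑ k ∈ Finset.range n, 2 * phi (Nat.dist j k) ^ 2 := by
    exact Finset.sum_congr rfl fun j _ => Finset.sum_congr rfl fun k _ => hval j k
  rw [hrw]
  set L := Real.log n with hL
  have hL2 : Real.log 2 ≤ L := Real.log_le_log (by norm_num) (by exact_mod_cast hn2)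
  have hLpos : (0.6931471803:ℝ) < L := lt_of_lt_of_le Real.log_two_gt_d9 hL2
  have hSF : ∑ m ∈ Finset.range n, phi m ^ 2 ≤ 17/4 + (9/4) * L := sum_phi_sq_le hn2
  have hTb : ∑ j ∈ Finset.range n, ∑ k ∈ Finset.range n, 2 * phi (Nat.dist j k) ^ 2
      ≤ (n:ℝ) * (17 + 9 * L) := by
    have hj : ∀ j ∈ Finset.range n, ∑ k ∈ Finset.range n, 2 * phi (Nat.dist j k) ^ 2
        ≤ 17 + 9 * L := by
      intro j hj
      have h1 : ∑ k ∈ Finset.range n, 2 * phi (Nat.dist j k) ^ 2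
          = 2 * ∑ k ∈ Finset.range n, phi (Nat.dist j k) ^ 2 := by
        rw [Finset.mul_sum]
      rw [h1]
      have h2 := sum_dist_le (fun m => phi m ^ 2) (fun m => sq_nonneg _)
        (Finset.mem_range.mp hj)
      nlinarith [hSF, h2]
    calc ∑ j ∈ Finset.range n, ∑ k ∈ Finset.range n, 2 * phi (Nat.dist j k) ^ 2
        ≤ ∑ _j ∈ Finset.range n, (17 + 9 * L) := Finset.sum_le_sum hj
      _ = (n:ℝ) * (17 + 9 * L) := by
          rw [Finset.sum_const, Finset.card_range, nsmul_eq_mul]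
  calc (1/(n:ℝ))^2 * ∑ j ∈ Finset.range n, ∑ k ∈ Finset.range n, 2 * phi (Nat.dist j k) ^ 2
      ≤ (1/(n:ℝ))^2 * ((n:ℝ) * (17 + 9 * L)) :=
        mul_le_mul_of_nonneg_left hTb (by positivity)
    _ = (17 + 9 * L) / n := by field_simp
    _ ≤ 40 * L / n := by
        have h40 : 17 + 9 * L ≤ 40 * L := by linarith
        exact div_le_div_of_nonneg_right h40 hn0.le
  done
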